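/- Let M be a symmetric positive definite n×n real matrix, and let D and Θ be n×n diagonal matrices with strictly positive diagonal entries. Then every eigenvalue λ of the matrix (D + Θ)⁻¹ (M + Θ) is real and satisfies min{λmin(D⁻¹M), 1} ≤ λ ≤ max{λmax(D⁻¹M), 1}. -/

import Mathlib

open Matrix

/-- The set of Rayleigh quotients `(vᵀ P v)/(vᵀ Q v)` over nonzero real vectors `v`.
For `P = M` symmetric positive definite and `Q = D` diagonal positive definite,
`sInf` (resp. `sSup`) of this set is `λmin(D⁻¹M)` (resp. `λmax(D⁻¹M)`). -/
def rayleighSet {n : ℕ} (P Q : Matrix (Fin n) (Fin n) ℝ) : Set ℝ :=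
  {r | ∃ v : Fin n → ℝ, v ≠ 0 ∧ r = (v ⬝ᵥ (P *ᵥ v)) / (v ⬝ᵥ (Q *ᵥ v))}

section Aux

variable {n : ℕ}

lemma diag_quad_eq (c : Fin n → ℝ) (w : Fin n → ℝ) :
    w ⬝ᵥ (Matrix.diagonal c *ᵥ w) = ∑ i, c i * w i ^ 2 := by
  simp [dotProduct, mulVec_diagonal]
  congr 1; ext i; ring

lemma diag_quad_pos {c : Fin n → ℝ} (hc : ∀ i, 0 < c i) {w : Fin n → ℝ} (hw : w ≠ 0) :
    0 < w ⬝ᵥ (Matrix.diagonal c *ᵥ w) := by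
  rw [diag_quad_eq]
  obtain ⟨i0, hi0⟩ := Function.ne_iff.mp hw
  have hi0' : w i0 ≠ 0 := hi0
  exact Finset.sum_pos' (fun i _ => mul_nonneg (hc i).le (sq_nonneg _))
    ⟨i0, Finset.mem_univ _, mul_pos (hc i0) (by positivity)⟩

lemma ray_bddBelow {M : Matrix (Fin n) (Fin n) ℝ} (hM : M.PosDef)
    {c : Fin n → ℝ} (hc : ∀ i, 0 < c i) :
    BddBelow (rayleighSet M (Matrix.diagonal c)) := by
  refine ⟨0, fun r hr => ?_⟩
  obtain ⟨w, hw, rfl⟩ := hr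
  apply div_nonneg _ (diag_quad_pos hc hw).le
  have := hM.dotProduct_mulVec_pos hw
  simpa using this.le

lemma ray_bddAbove {M : Matrix (Fin n) (Fin n) ℝ} {c : Fin n → ℝ}
    (hc : ∀ i, 0 < c i) : BddAbove (rayleighSet M (Matrix.diagonal c)) := by
  rcases isEmpty_or_nonempty (Fin n) with hE | hNE
  · refine ⟨0, fun r hr => ?_⟩
    obtain ⟨w, hw, rfl⟩ := hr
    exact absurd (funext fun i => (hE.false i).elim) hw
  · set S : ℝ := ∑ i, ∑ j, |M i j| with hS
    set cmin : ℝ := Finset.univ.inf' Finset.univ_nonempty c with hcmin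
    have hcmin_pos : 0 < cmin := by
      rw [hcmin]
      obtain ⟨i, _, hi⟩ := Finset.exists_mem_eq_inf' Finset.univ_nonempty c
      rw [hi]; exact hc i
    refine ⟨S / cmin, fun r hr => ?_⟩
    obtain ⟨w, hw, rfl⟩ := hr
    set q : ℝ := ∑ i, w i ^ 2 with hq
    have hq_pos : 0 < q := by
      obtain ⟨i0, hi0⟩ := Function.ne_iff.mp hw
      have hi0' : w i0 ≠ 0 := hi0
      exact Finset.sum_pos' (fun i _ => sq_nonneg _)
        ⟨i0, Finset.mem_univ _, by positivity⟩
    have hsq : ∀ i, w i ^ 2 ≤ q :=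
      fun i => Finset.single_le_sum (fun j _ => sq_nonneg (w j)) (Finset.mem_univ i)
    have hnum : w ⬝ᵥ (M *ᵥ w) ≤ S * q := by
      have : w ⬝ᵥ (M *ᵥ w) = ∑ i, ∑ j, w i * (M i j * w j) := by
        simp [dotProduct, mulVec, Finset.mul_sum]
      rw [this, hS, Finset.sum_mul]
      apply Finset.sum_le_sum
      intro i _
      rw [Finset.sum_mul]
      apply Finset.sum_le_sum
      intro j _
      have h1 : w i ^ 2 ≤ q := hsq i
      have h2 : w j ^ 2 ≤ q := hsq j
      have h3 : w i * (M i j * w j) ≤ |M i j| * (|w i| * |w j|) := by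
        calc w i * (M i j * w j) ≤ |w i * (M i j * w j)| := le_abs_self _
          _ = |M i j| * (|w i| * |w j|) := by rw [abs_mul, abs_mul]; ring
      refine h3.trans ?_
      have h4 : |w i| * |w j| ≤ q := by
        nlinarith [sq_nonneg (|w i| - |w j|), sq_abs (w i), sq_abs (w j),
          abs_nonneg (w i), abs_nonneg (w j)]
      exact mul_le_mul_of_nonneg_left h4 (abs_nonneg _)
    have hden : cmin * q ≤ w ⬝ᵥ (Matrix.diagonal c *ᵥ w) := by
      rw [diag_quad_eq, hq, Finset.mul_sum]
      apply Finset.sum_le_sum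
      intro i _
      exact mul_le_mul_of_nonneg_right
        (Finset.inf'_le c (Finset.mem_univ i)) (sq_nonneg _)
    have hden_pos : 0 < w ⬝ᵥ (Matrix.diagonal c *ᵥ w) := diag_quad_pos hc hw
    calc w ⬝ᵥ (M *ᵥ w) / (w ⬝ᵥ (Matrix.diagonal c *ᵥ w))
        ≤ (S * q) / (cmin * q) := by
          apply div_le_div₀ (by positivity) hnum (by positivity) hden
      _ = S / cmin := by
          rw [mul_div_mul_right _ _ (ne_of_gt hq_pos)]

end Aux

/-- Every eigenvalue `μ` of `(D + Θ)⁻¹ (M + Θ)` is real and lies in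
`[min{λmin(D⁻¹M), 1}, max{λmax(D⁻¹M), 1}]`. -/
theorem eig_bound_diag_plus_theta {n : ℕ}
    (M : Matrix (Fin n) (Fin n) ℝ) (hM : M.PosDef)
    (d θ : Fin n → ℝ) (hd : ∀ i, 0 < d i) (hθ : ∀ i, 0 < θ i)
    (μ : ℂ) (v : Fin n → ℂ) (hv : v ≠ 0)
    (heig : (((Matrix.diagonal d + Matrix.diagonal θ)⁻¹ *
        (M + Matrix.diagonal θ)).map Complex.ofReal) *ᵥ v = μ • v) :
    μ.im = 0 ∧
      min (sInf (rayleighSet M (Matrix.diagonal d))) 1 ≤ μ.re ∧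
      μ.re ≤ max (sSup (rayleighSet M (Matrix.diagonal d))) 1 := by
  obtain ⟨i0, hi0⟩ := Function.ne_iff.mp hv
  set c : Fin n → ℝ := fun i => d i + θ i with hcdef
  have hcpos : ∀ i, 0 < c i := fun i => add_pos (hd i) (hθ i)
  set B : Matrix (Fin n) (Fin n) ℝ := M + Matrix.diagonal θ with hBdef
  have hDsum : Matrix.diagonal d + Matrix.diagonal θ = Matrix.diagonal c :=
    (Matrix.diagonal_add d θ)
  have hdet : IsUnit (Matrix.diagonal c).det := by
    rw [Matrix.det_diagonal]
    exact isUnit_iff_ne_zero.mpr (Finset.prod_ne_zero_iff.mpr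
      fun i _ => ne_of_gt (hcpos i))
  have hCA : Matrix.diagonal c * ((Matrix.diagonal c)⁻¹ * B) = B := by
    rw [← Matrix.mul_assoc, Matrix.mul_nonsing_inv _ hdet, Matrix.one_mul]
  -- key eigen-equation with the inverse removed
  have hkey : (B.map Complex.ofReal) *ᵥ v
      = μ • (((Matrix.diagonal c).map Complex.ofReal) *ᵥ v) := by
    have h := congrArg (fun w => ((Matrix.diagonal c).map Complex.ofReal) *ᵥ w) heig
    simp only [hDsum] at h
    rw [Matrix.mulVec_mulVec, Matrix.mulVec_smul] at h
    have hmap : ((Matrix.diagonal c).map Complex.ofReal) *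
        (((Matrix.diagonal c)⁻¹ * B).map Complex.ofReal)
        = B.map Complex.ofReal := by
      have : ∀ A : Matrix (Fin n) (Fin n) ℝ, A.map Complex.ofReal
          = A.map (Complex.ofRealHom : ℝ →+* ℂ) := fun A => rfl
      rw [this, this, this, ← Matrix.map_mul, hCA]
    rw [hmap] at h
    exact h
  -- quadratic forms
  set t : ℂ := star v ⬝ᵥ ((B.map Complex.ofReal) *ᵥ v) with htdef
  set s : ℂ := star v ⬝ᵥ (((Matrix.diagonal c).map Complex.ofReal) *ᵥ v) with hsdef
  have hts : t = μ * s := by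
    rw [htdef, hkey, dotProduct_smul, hsdef, smul_eq_mul]
  have hdiagmap : (Matrix.diagonal c).map Complex.ofReal
      = Matrix.diagonal (fun i => (c i : ℂ)) := by
    rw [Matrix.diagonal_map (by simp)]
  have hs : s = ((∑ i, c i * Complex.normSq (v i) : ℝ) : ℂ) := by
    rw [hsdef, hdiagmap]
    simp only [dotProduct, mulVec_diagonal, Pi.star_apply]
    push_cast
    congr 1
    ext i
    simp only [Complex.normSq_eq_conj_mul_self, Complex.star_def]
    ring
  have hsre_pos : 0 < ∑ i, c i * Complex.normSq (v i) := by
    refine Finset.sum_pos' (fun i _ => mul_nonneg (hcpos i).le (Complex.normSq_nonneg _))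
      ⟨i0, Finset.mem_univ _, ?_⟩
    have hi0' : v i0 ≠ 0 := hi0
    have : Complex.normSq (v i0) ≠ 0 := fun h => hi0' (Complex.normSq_eq_zero.mp h)
    have h0 : 0 < Complex.normSq (v i0) := lt_of_le_of_ne (Complex.normSq_nonneg _) (Ne.symm this)
    exact mul_pos (hcpos i0) h0
  -- B is symmetric, so t is real
  have hBherm : (B.map Complex.ofReal).IsHermitian := by
    have hB : B.IsHermitian := hM.1.add (Matrix.isHermitian_diagonal θ)
    have : (B.map Complex.ofReal)ᴴ = (Bᴴ).map Complex.ofReal := by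
      rw [Matrix.conjTranspose_map]
      intro a; simp
    rw [Matrix.IsHermitian, this, hB.eq]
  have htreal : star t = t := by
    rw [htdef]
    conv_lhs => rw [star_dotProduct, star_star, star_mulVec, hBherm.eq, ← dotProduct_mulVec]
  have htim : t.im = 0 := by
    have := congrArg Complex.im htreal
    simp only [Complex.star_def, Complex.conj_im] at this
    linarith
  have him : μ.im = 0 := by
    have h1 : (μ * s).im = 0 := by rw [← hts]; exact htim
    rw [hs] at h1
    simp only [Complex.mul_im, Complex.ofReal_re, Complex.ofReal_im, mul_zero, zero_add] at h1
    have := mul_eq_zero.mp (by linarith : μ.im * (∑ i, c i * Complex.normSq (v i)) = 0)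
    rcases this with h | h
    · exact h
    · exact absurd h (ne_of_gt hsre_pos)
  refine ⟨him, ?_⟩
  -- extract a real eigenvector
  have hμ : μ = (μ.re : ℂ) := Complex.ext rfl (by simp [him])
  have hcomp : ∀ i, ∑ j, (B i j : ℂ) * v j = (μ.re : ℂ) * ((c i : ℂ) * v i) := by
    intro i
    have h := congrFun hkey i
    rw [hdiagmap] at h
    rw [Pi.smul_apply, Matrix.mulVec_diagonal, smul_eq_mul] at h
    simp only [Matrix.mulVec, dotProduct, Matrix.map_apply] at h
    rw [hμ] at h
    exact h
  have hre : ∀ i, ∑ j, B i j * (v j).re = μ.re * (c i * (v i).re) := by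
    intro i
    have h := congrArg Complex.re (hcomp i)
    rw [Complex.re_sum] at h
    simpa [Complex.mul_re] using h
  have him' : ∀ i, ∑ j, B i j * (v j).im = μ.re * (c i * (v i).im) := by
    intro i
    have h := congrArg Complex.im (hcomp i)
    rw [Complex.im_sum] at h
    simpa [Complex.mul_im, Complex.mul_re] using h
  have hwex : ∃ w : Fin n → ℝ, w ≠ 0 ∧ B *ᵥ w = μ.re • (Matrix.diagonal c *ᵥ w) := by
    by_cases hre0 : (fun i => (v i).re) = (0 : Fin n → ℝ)
    · refine ⟨fun i => (v i).im, ?_, ?_⟩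
      · intro h0
        have hi0' : v i0 ≠ 0 := hi0
        exact hi0' (Complex.ext (congrFun hre0 i0) (congrFun h0 i0))
      · funext i
        rw [Pi.smul_apply, Matrix.mulVec_diagonal, smul_eq_mul]
        simp only [Matrix.mulVec, dotProduct]
        exact him' i
    · refine ⟨fun i => (v i).re, hre0, ?_⟩
      funext i
      rw [Pi.smul_apply, Matrix.mulVec_diagonal, smul_eq_mul]
      simp only [Matrix.mulVec, dotProduct]
      exact hre i
  obtain ⟨w, hw0, hw⟩ := hwex
  -- quadratic form identity
  have hquad : w ⬝ᵥ (B *ᵥ w) = μ.re * (w ⬝ᵥ (Matrix.diagonal c *ᵥ w)) := by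
    rw [hw, dotProduct_smul, smul_eq_mul]
  set a : ℝ := w ⬝ᵥ (M *ᵥ w) with hadef
  set e : ℝ := w ⬝ᵥ (Matrix.diagonal θ *ᵥ w) with hedef
  set b : ℝ := w ⬝ᵥ (Matrix.diagonal d *ᵥ w) with hbdef
  have hBquad : w ⬝ᵥ (B *ᵥ w) = a + e := by
    rw [hBdef, Matrix.add_mulVec, dotProduct_add]
  have hCquad : w ⬝ᵥ (Matrix.diagonal c *ᵥ w) = b + e := by
    rw [← hDsum, Matrix.add_mulVec, dotProduct_add]
  have ha : 0 < a := by
    have := hM.dotProduct_mulVec_pos hw0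
    simpa using this
  have he : 0 < e := diag_quad_pos hθ hw0
  have hb : 0 < b := diag_quad_pos hd hw0
  have hmu_eq : μ.re = (a + e) / (b + e) := by
    rw [eq_div_iff (by positivity), ← hBquad, hquad, hCquad]
  have hmem : a / b ∈ rayleighSet M (Matrix.diagonal d) := ⟨w, hw0, rfl⟩
  constructor
  · -- lower bound
    have h1 : sInf (rayleighSet M (Matrix.diagonal d)) ≤ a / b :=
      csInf_le (ray_bddBelow hM hd) hmem
    have h2 : min (a / b) 1 ≤ μ.re := by
      rw [hmu_eq]
      rcases le_total a b with hab | hab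
      · refine (min_le_left _ _).trans ?_
        rw [div_le_div_iff₀ hb (by positivity)]
        nlinarith
      · refine (min_le_right _ _).trans ?_
        rw [le_div_iff₀ (by positivity)]
        nlinarith
    calc min (sInf (rayleighSet M (Matrix.diagonal d))) 1
        ≤ min (a / b) 1 := min_le_min h1 le_rfl
      _ ≤ μ.re := h2
  · -- upper bound
    have h1 : a / b ≤ sSup (rayleighSet M (Matrix.diagonal d)) :=
      le_csSup (ray_bddAbove hd) hmem
    have h2 : μ.re ≤ max (a / b) 1 := by
      rw [hmu_eq]
      rcases le_total a b with hab | hab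
      · refine le_trans ?_ (le_max_right _ _)
        rw [div_le_one (by positivity)]
        linarith
      · refine le_trans ?_ (le_max_left _ _)
        rw [div_le_div_iff₀ (by positivity) hb]
        nlinarith
    calc μ.re ≤ max (a / b) 1 := h2
      _ ≤ max (sSup (rayleighSet M (Matrix.diagonal d))) 1 := max_le_max h1 le_rfl
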